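/- Let 0 < α < 1 and let (d_k) be a sequence of complex numbers. Suppose A, β > 0, G_j := (j+1)^{2-α} − 2j^{2-α} + (j-1)^{2-α} for j ≥ 1, and that (A + 1 + β)d_1 = (−A + 1 + β)d_0 and for each k ≥ 1, (A + 1 + β)d_{k+1} = (−A + 1 + β − βG_1)d_k + β∑_{j=1}^{k-1}(G_{k-j} − G_{k-j+1})d_j + βG_k d_0. If additionally βG_1 ≤ 1 + β, then |d_k| ≤ |d_0| for all k ≥ 1. -/

import Mathlib

open Set

lemma concave_slope' {g : ℝ → ℝ} (hg : ConcaveOn ℝ (Set.Ici 0) g) {x y : ℝ}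
    (hx : 0 ≤ x) (hxy : x ≤ y) : g (y + 1) + g x ≤ g (x + 1) + g y := by
  rcases eq_or_lt_of_le hxy with rfl | hlt
  · linarith
  · have hy : 0 ≤ y := hx.trans hxy
    have hd : 0 < y + 1 - x := by linarith
    set s : ℝ := 1 / (y + 1 - x) with hs
    set t : ℝ := (y - x) / (y + 1 - x) with ht
    have hs0 : 0 ≤ s := by positivity
    have ht0 : 0 ≤ t := by
      apply div_nonneg <;> linarith
    have hst : s + t = 1 := by rw [hs, ht]; field_simp; ring
    have hts : t + s = 1 := by linarith
    have hmem1 : x ∈ Set.Ici (0:ℝ) := hx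
    have hmem2 : y + 1 ∈ Set.Ici (0:ℝ) := Set.mem_Ici.2 (by linarith)
    have k1 := hg.2 hmem1 hmem2 hs0 ht0 hst
    have k2 := hg.2 hmem1 hmem2 ht0 hs0 hts
    rw [smul_eq_mul, smul_eq_mul, smul_eq_mul, smul_eq_mul] at k1 k2
    have e1 : s * x + t * (y + 1) = y := by rw [hs, ht]; field_simp; ring
    have e2 : t * x + s * (y + 1) = x + 1 := by rw [hs, ht]; field_simp; ring
    rw [e1] at k1
    rw [e2] at k2
    have hsum : (s * g x + t * g (y + 1)) + (t * g x + s * g (y + 1))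
        = (s + t) * (g x + g (y + 1)) := by ring
    rw [hst, one_mul] at hsum
    linarith

lemma phi_concave {p : ℝ} (hp1 : 1 < p) (hp2 : p < 2) :
    ConcaveOn ℝ (Set.Ici 0) (fun x : ℝ => (x + 1) ^ p - x ^ p) := by
  have hd : ∀ x : ℝ, HasDerivAt (fun x : ℝ => (x + 1) ^ p - x ^ p)
      (p * (x + 1) ^ (p - 1) - p * x ^ (p - 1)) x := by
    intro x
    have h1 : HasDerivAt (fun x : ℝ => (x + 1) ^ p) (p * (x + 1) ^ (p - 1)) x := by
      have h0 := Real.hasDerivAt_rpow_const (x := x + 1) (p := p) (Or.inr hp1.le)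
      have hc : HasDerivAt (fun y : ℝ => y + 1) 1 x := (hasDerivAt_id x).add_const 1
      have h2 := h0.comp x hc
      rw [mul_one] at h2
      exact h2
    exact h1.sub (Real.hasDerivAt_rpow_const (Or.inr hp1.le))
  apply AntitoneOn.concaveOn_of_deriv (convex_Ici 0)
  · exact fun x _ => (hd x).continuousAt.continuousWithinAt
  · exact fun x hx => (hd x).differentiableAt.differentiableWithinAt
  · intro x hx y hy hxy
    rw [interior_Ici] at hx hy
    rw [(hd x).deriv, (hd y).deriv]
    have hq0 : (0:ℝ) ≤ p - 1 := by linarith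
    have hq1 : p - 1 ≤ 1 := by linarith
    have hg := Real.concaveOn_rpow hq0 hq1
    have hkey := concave_slope' hg (le_of_lt hx) hxy
    nlinarith [hkey, hp1]

lemma tele_sum (G : ℕ → ℝ) : ∀ m : ℕ, ∑ i ∈ Finset.Icc 1 m, (G i - G (i + 1)) = G 1 - G (m + 1) := by
  intro m
  induction m with
  | zero => simp
  | succ n ih =>
    rw [Finset.sum_Icc_succ_top (Nat.succ_le_succ (Nat.zero_le n)), ih]
    ring

lemma reidx_sum (G : ℕ → ℝ) (K : ℕ) (hK : 1 ≤ K) :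
    ∑ j ∈ Finset.Icc 1 (K - 1), (G (K - j) - G (K - j + 1)) = G 1 - G K := by
  obtain ⟨m, rfl⟩ : ∃ m, K = m + 1 := ⟨K - 1, by omega⟩
  have : ∑ j ∈ Finset.Icc 1 (m + 1 - 1), (G (m + 1 - j) - G (m + 1 - j + 1))
      = ∑ i ∈ Finset.Icc 1 m, (G i - G (i + 1)) := by
    apply Finset.sum_nbij' (fun j => m + 1 - j) (fun i => m + 1 - i)
    · intro a ha; simp only [Finset.mem_Icc] at *; omega
    · intro a ha; simp only [Finset.mem_Icc] at *; omega
    · intro a ha; simp only [Finset.mem_Icc] at *; omega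
    · intro a ha; simp only [Finset.mem_Icc] at *; omega
    · intro a ha; rfl
  rw [this, tele_sum]

theorem stmt_12 (α : ℝ) (hα0 : 0 < α) (hα1 : α < 1) (d : ℕ → ℂ) (A β : ℝ)
    (hA : 0 < A) (hβ : 0 < β) (G : ℕ → ℝ)
    (hG : ∀ j, G j = ((j : ℝ) + 1) ^ (2 - α) - 2 * (j : ℝ) ^ (2 - α) + ((j : ℝ) - 1) ^ (2 - α))
    (h0 : ((A + 1 + β : ℝ) : ℂ) * d 1 = ((-A + 1 + β : ℝ) : ℂ) * d 0)
    (hrec : ∀ k : ℕ, 1 ≤ k →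
      ((A + 1 + β : ℝ) : ℂ) * d (k + 1)
        = ((-A + 1 + β - β * G 1 : ℝ) : ℂ) * d k
          + (β : ℂ) * ∑ j ∈ Finset.Icc 1 (k - 1), ((G (k - j) - G (k - j + 1) : ℝ) : ℂ) * d j
          + ((β * G k : ℝ) : ℂ) * d 0)
    (hstab : β * G 1 ≤ 1 + β) :
    ∀ k : ℕ, 1 ≤ k → ‖d k‖ ≤ ‖d 0‖ := by
  have hp1 : 1 < 2 - α := by linarith
  have hp2 : 2 - α < 2 := by linarith
  have hpos : (0:ℝ) < A + 1 + β := by linarith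
  -- G is nonnegative for j ≥ 1
  have hGpos : ∀ j : ℕ, 1 ≤ j → 0 ≤ G j := by
    intro j hj
    have hj1 : (1:ℝ) ≤ (j:ℝ) := by exact_mod_cast hj
    have hf := convexOn_rpow (le_of_lt hp1)
    have ha : ((j:ℝ) - 1) ∈ Set.Ici (0:ℝ) := Set.mem_Ici.2 (by linarith)
    have hb : ((j:ℝ) + 1) ∈ Set.Ici (0:ℝ) := Set.mem_Ici.2 (by linarith)
    have key := hf.2 ha hb (by norm_num : (0:ℝ) ≤ 1/2) (by norm_num : (0:ℝ) ≤ 1/2)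
      (by norm_num : (1/2 : ℝ) + 1/2 = 1)
    simp only [smul_eq_mul] at key
    have e : (1/2 : ℝ) * ((j:ℝ) - 1) + (1/2 : ℝ) * ((j:ℝ) + 1) = (j:ℝ) := by ring
    rw [e] at key
    rw [hG j]
    linarith
  -- G is antitone on j ≥ 1
  have hGanti : ∀ j : ℕ, 1 ≤ j → G (j + 1) ≤ G j := by
    intro j hj
    have hj1 : (1:ℝ) ≤ (j:ℝ) := by exact_mod_cast hj
    have hφ := phi_concave hp1 hp2
    have ha : ((j:ℝ) - 1) ∈ Set.Ici (0:ℝ) := Set.mem_Ici.2 (by linarith)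
    have hb : ((j:ℝ) + 1) ∈ Set.Ici (0:ℝ) := Set.mem_Ici.2 (by linarith)
    have key := hφ.2 ha hb (by norm_num : (0:ℝ) ≤ 1/2) (by norm_num : (0:ℝ) ≤ 1/2)
      (by norm_num : (1/2 : ℝ) + 1/2 = 1)
    simp only [smul_eq_mul] at key
    have e : (1/2 : ℝ) * ((j:ℝ) - 1) + (1/2 : ℝ) * ((j:ℝ) + 1) = (j:ℝ) := by ring
    rw [e] at key
    have e2 : (j:ℝ) - 1 + 1 = (j:ℝ) := by ring
    rw [e2] at key
    rw [hG j, hG (j + 1)]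
    push_cast
    ring_nf at key ⊢
    linarith
  -- G k ≤ G 1 for k ≥ 1
  have hGle : ∀ k : ℕ, 1 ≤ k → G k ≤ G 1 := by
    intro k hk
    induction k with
    | zero => omega
    | succ n ih =>
      rcases Nat.lt_or_ge 1 (n + 1) with h | h
      · have hn : 1 ≤ n := by omega
        exact le_trans (hGanti n hn) (ih hn)
      · have hn1 : n + 1 = 1 := by omega
        rw [hn1]
  suffices H : ∀ k : ℕ, ‖d k‖ ≤ ‖d 0‖ by
    exact fun k _ => H k
  intro k
  induction k using Nat.strong_induction_on with
  | _ k ih =>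
    rcases k with _ | k1
    · exact le_refl _
    rcases k1 with _ | K
    · -- k = 1
      have e := congrArg norm h0
      rw [norm_mul, norm_mul, Complex.norm_real, Complex.norm_real, Real.norm_eq_abs, Real.norm_eq_abs, abs_of_pos hpos] at e
      have h2 : |(-A + 1 + β)| ≤ A + 1 + β := abs_le.2 ⟨by linarith, by linarith⟩
      have h3 : (A + 1 + β) * ‖d 1‖ ≤ (A + 1 + β) * ‖d 0‖ := by
        rw [e]
        exact mul_le_mul_of_nonneg_right h2 (norm_nonneg _)
      exact le_of_mul_le_mul_left h3 hpos
    · -- k = K + 2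
      have hK1 : 1 ≤ K + 1 := Nat.succ_le_succ (Nat.zero_le K)
      have e := hrec (K + 1) hK1
      simp only [Nat.add_sub_cancel] at e
      have eabs := congrArg norm e
      rw [norm_mul, Complex.norm_real, Real.norm_eq_abs, abs_of_pos hpos] at eabs
      have D0 : (0:ℝ) ≤ ‖d 0‖ := norm_nonneg _
      -- bound the three summands
      have t1 : ‖((-A + 1 + β - β * G 1 : ℝ) : ℂ) * d (K + 1)‖
          ≤ |(-A + 1 + β - β * G 1)| * ‖d 0‖ := by
        rw [norm_mul, Complex.norm_real, Real.norm_eq_abs]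
        exact mul_le_mul_of_nonneg_left (ih (K + 1) (by omega)) (abs_nonneg _)
      have t2 : ‖(β : ℂ) *
            ∑ j ∈ Finset.Icc 1 K, ((G (K + 1 - j) - G (K + 1 - j + 1) : ℝ) : ℂ) * d j‖
          ≤ β * (G 1 - G (K + 1)) * ‖d 0‖ := by
        rw [norm_mul, Complex.norm_real, Real.norm_eq_abs, abs_of_pos hβ]
        have hsum1 : ‖∑ j ∈ Finset.Icc 1 K,
              ((G (K + 1 - j) - G (K + 1 - j + 1) : ℝ) : ℂ) * d j‖
            ≤ ∑ j ∈ Finset.Icc 1 K, (G (K + 1 - j) - G (K + 1 - j + 1)) * ‖d 0‖ := by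
          refine le_trans (norm_sum_le _ _) (Finset.sum_le_sum ?_)
          intro j hj
          simp only [Finset.mem_Icc] at hj
          have hcoeff : 0 ≤ G (K + 1 - j) - G (K + 1 - j + 1) := by
            have hj1 : 1 ≤ K + 1 - j := by omega
            linarith [hGanti (K + 1 - j) hj1]
          rw [norm_mul, Complex.norm_real, Real.norm_eq_abs, abs_of_nonneg hcoeff]
          exact mul_le_mul_of_nonneg_left (ih j (by omega)) hcoeff
        have hre := reidx_sum G (K + 1) hK1
        simp only [Nat.add_sub_cancel] at hre
        rw [← Finset.sum_mul, hre] at hsum1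
        calc β * ‖∑ j ∈ Finset.Icc 1 K,
              ((G (K + 1 - j) - G (K + 1 - j + 1) : ℝ) : ℂ) * d j‖
            ≤ β * ((G 1 - G (K + 1)) * ‖d 0‖) :=
              mul_le_mul_of_nonneg_left hsum1 (le_of_lt hβ)
          _ = β * (G 1 - G (K + 1)) * ‖d 0‖ := by ring
      have t3 : ‖((β * G (K + 1) : ℝ) : ℂ) * d 0‖
          = β * G (K + 1) * ‖d 0‖ := by
        rw [norm_mul, Complex.norm_real, Real.norm_eq_abs,
          abs_of_nonneg (mul_nonneg hβ.le (hGpos (K + 1) hK1))]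
      have hc1 : |(-A + 1 + β - β * G 1)| ≤ A + 1 + β - β * G 1 :=
        abs_le.2 ⟨by linarith, by linarith⟩
      have tri2 := norm_add_le (((-A + 1 + β - β * G 1 : ℝ) : ℂ) * d (K + 1))
        ((β : ℂ) * ∑ j ∈ Finset.Icc 1 K, ((G (K + 1 - j) - G (K + 1 - j + 1) : ℝ) : ℂ) * d j)
      have tri : ‖((-A + 1 + β - β * G 1 : ℝ) : ℂ) * d (K + 1)
            + (β : ℂ) * ∑ j ∈ Finset.Icc 1 K, ((G (K + 1 - j) - G (K + 1 - j + 1) : ℝ) : ℂ) * d j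
            + ((β * G (K + 1) : ℝ) : ℂ) * d 0‖
          ≤ (A + 1 + β) * ‖d 0‖ := by
        refine le_trans (norm_add_le _ _) ?_
        have hprod := mul_le_mul_of_nonneg_right hc1 D0
        nlinarith [t1, t2, t3, tri2, hprod]
      have final : (A + 1 + β) * ‖d (K + 1 + 1)‖
          ≤ (A + 1 + β) * ‖d 0‖ := by
        rw [eabs]
        exact tri
      exact le_of_mul_le_mul_left final hpos
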